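/- Let D be a chain decomposition of a connected undirected graph G. An edge e of G is a bridge if and only if e is not contained in any chain of D. -/

import Mathlib

variable {V : Type*} [Fintype V] [DecidableEq V]

/-- Follow tree edges (parent pointers) towards the root, starting at `w`, stopping at
the first vertex that is already visited, or at the root.  The first argument is fuel. -/
def towardRoot (parent : V → V) (root : V) (visited : Finset V) : ℕ → V → List V
  | 0, w => [w]
  | n + 1, w =>
      if w ∈ visited ∨ w = root then [w]
      else w :: towardRoot parent root visited n (parent w)

/-- Schmidt's chain construction: process the back edges in order; the back edge `(v, w)`
(oriented away from the root, so `v` is an ancestor of `w`) generates the chain starting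
at `v`, following the back edge to `w` and then tree edges towards the root, stopping at
the first already-visited vertex (or the root); all vertices encountered are marked
visited. -/
def runChains (parent : V → V) (root : V) : List (V × V) → Finset V → List (List V)
  | [], _ => []
  | (v, w) :: rest, visited =>
      let c := v :: towardRoot parent root (insert v visited) (Fintype.card V) w
      c :: runChains parent root rest (visited ∪ c.toFinset)

/-- A DFS tree of a graph `G`, rooted at `root`, given by parent pointers, together with
discovery times `dfi` and the list of back edges `(v, w)` (with the ancestor `v` first,
i.e. oriented away from the root), listed in increasing order of the discovery time of
their origin, as in Schmidt's chain decomposition. -/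
structure SchmidtDFS (G : SimpleGraph V) where
  root : V
  parent : V → V
  dfi : V → ℕ
  backEdges : List (V × V)
  parent_root : parent root = root
  parent_adj : ∀ v, v ≠ root → G.Adj v (parent v)
  reaches_root : ∀ v, ∃ k, parent^[k] v = root
  dfi_inj : Function.Injective dfi
  dfi_parent : ∀ v, v ≠ root → dfi (parent v) < dfi v
  /-- every back edge is an edge of `G` joining a vertex `w` to a proper ancestor `v`
  which is not its parent (so it is not a tree edge) -/
  backEdges_spec : ∀ p ∈ backEdges, G.Adj p.1 p.2 ∧ p.1 ≠ parent p.2 ∧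
      ∃ k, 2 ≤ k ∧ parent^[k] p.2 = p.1
  /-- every non-tree edge of `G` appears among the back edges -/
  backEdges_complete : ∀ u v, G.Adj u v → u ≠ parent v → v ≠ parent u →
      (u, v) ∈ backEdges ∨ (v, u) ∈ backEdges
  backEdges_nodup : (backEdges.map fun p => s(p.1, p.2)).Nodup
  /-- back edges are processed in increasing order of the discovery time of their origin -/
  backEdges_sorted : backEdges.Pairwise fun p q => dfi p.1 ≤ dfi q.1

/-- The chain decomposition determined by a DFS structure: initially no vertex is
visited, and back edges are processed in order. -/
def SchmidtDFS.chains {G : SimpleGraph V} (D : SchmidtDFS G) : List (List V) :=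
  runChains D.parent D.root D.backEdges ∅

/-- The edges of a chain (given as the list of its vertices in order). -/
def chainEdges (c : List V) : List (Sym2 V) :=
  List.zipWith (fun a b => s(a, b)) c c.tail

/-- A chain is a cycle if it has at least two vertices and ends where it starts. -/
def IsCycleChain (c : List V) : Prop := 2 ≤ c.length ∧ c.head? = c.getLast?



section SchmidtAux

set_option linter.unusedSectionVars false
set_option maxHeartbeats 1000000

variable (p : V → V) (r : V) (dfi : V → ℕ)

lemma iterRoot (hpr : p r = r) : ∀ m, p^[m] r = r := by
  intro m
  induction m with
  | zero => rfl
  | succ m ih => rw [Function.iterate_succ_apply', ih, hpr]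

lemma dfiIterLt (hpr : p r = r) (hd : ∀ v, v ≠ r → dfi (p v) < dfi v) :
    ∀ (m : ℕ) (x : V), x ≠ r → dfi (p^[m + 1] x) < dfi x := by
  intro m
  induction m with
  | zero => intro x hx; simpa using hd x hx
  | succ m ih =>
    intro x hx
    rw [show m + 1 + 1 = (m + 1) + 1 from rfl, Function.iterate_succ_apply]
    by_cases h : p x = r
    · rw [h, iterRoot p r hpr]
      have := hd x hx
      rw [h] at this; exact this
    · exact (ih (p x) h).trans (hd x hx)

lemma noCycle (hpr : p r = r) (hd : ∀ v, v ≠ r → dfi (p v) < dfi v)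
    {m : ℕ} {x : V} (hm : 1 ≤ m) (h : p^[m] x = x) (hx : x ≠ r) : False := by
  obtain ⟨m, rfl⟩ := Nat.exists_eq_add_of_le hm
  have := dfiIterLt p r dfi hpr hd m x hx
  rw [show 1 + m = m + 1 by omega] at h
  rw [h] at this
  exact lt_irrefl _ this

lemma ancLt (hpr : p r = r) (hd : ∀ v, v ≠ r → dfi (p v) < dfi v)
    {m : ℕ} {x a : V} (h : p^[m] x = a) (hne : a ≠ x) : dfi a < dfi x := by
  cases m with
  | zero => exact absurd h.symm hne
  | succ m =>
    have hx : x ≠ r := fun hxr => hne (by rw [hxr, iterRoot p r hpr] at h; rw [hxr]; exact h.symm)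
    rw [← h]
    exact dfiIterLt p r dfi hpr hd m x hx

lemma treeReach {G : SimpleGraph V} (hadj : ∀ v, v ≠ r → G.Adj v (p v)) (e : Sym2 V) :
    ∀ (m : ℕ) (x : V), (∀ j < m, p^[j] x ≠ r) → (∀ j < m, s(p^[j] x, p (p^[j] x)) ≠ e) →
      (G \ SimpleGraph.fromEdgeSet {e}).Reachable x (p^[m] x) := by
  intro m
  induction m with
  | zero => intro x _ _; exact SimpleGraph.Reachable.refl x
  | succ m ih =>
    intro x h1 h2
    have hr := ih x (fun j hj => h1 j (by omega)) (fun j hj => h2 j (by omega))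
    refine hr.trans (SimpleGraph.Adj.reachable ?_)
    rw [Function.iterate_succ_apply']
    refine ⟨hadj _ (h1 m (by omega)), ?_⟩
    rw [SimpleGraph.fromEdgeSet_adj]
    rintro ⟨hm, -⟩
    exact h2 m (by omega) hm


lemma towardRoot_head (vis : Finset V) (n : ℕ) (w : V) :
    ∃ t, towardRoot p r vis n w = w :: t := by
  cases n with
  | zero => exact ⟨[], rfl⟩
  | succ n =>
    rw [towardRoot]
    split
    · exact ⟨[], rfl⟩
    · exact ⟨_, rfl⟩

lemma towardRoot_eq (vis : Finset V) :
    ∀ (k n : ℕ) (w : V), k ≤ n →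
      (∀ j < k, ¬(p^[j] w ∈ vis ∨ p^[j] w = r)) →
      (p^[k] w ∈ vis ∨ p^[k] w = r) →
      towardRoot p r vis n w = (List.range (k + 1)).map (fun i => p^[i] w) := by
  intro k
  induction k with
  | zero =>
    intro n w _ _ hs
    simp only [Function.iterate_zero, id] at hs
    cases n with
    | zero => rfl
    | succ n => rw [towardRoot, if_pos hs]; rfl
  | succ k ih =>
    intro n w hn hlt hs
    obtain ⟨n, rfl⟩ : ∃ n', n = n' + 1 := ⟨n - 1, by omega⟩
    rw [towardRoot, if_neg (by simpa using hlt 0 (by omega))]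
    rw [ih n (p w) (by omega)
      (fun j hj => by
        rw [← Function.iterate_succ_apply]
        exact hlt (j + 1) (by omega))
      (by rw [← Function.iterate_succ_apply]; exact hs)]
    have hc : ((fun i => p^[i] w) ∘ Nat.succ) = (fun i => p^[i] (p w)) := by
      funext i; exact Function.iterate_succ_apply p i w
    conv_rhs => rw [List.range_succ_eq_map, List.map_cons, List.map_map]
    rw [hc]
    rfl

lemma chainEdges_cons_cons (a b : V) (l : List V) :
    chainEdges (a :: b :: l) = s(a, b) :: chainEdges (b :: l) := rfl

lemma chainEdges_map_range :
    ∀ (k : ℕ) (f : ℕ → V), chainEdges ((List.range (k + 1)).map f) =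
      (List.range k).map (fun i => s(f i, f (i + 1))) := by
  intro k
  induction k with
  | zero => intro f; simp [chainEdges, List.range_succ]
  | succ k ih =>
    intro f
    have h1 : (List.range (k + 1 + 1)).map f
        = f 0 :: (List.range (k + 1)).map (f ∘ Nat.succ) := by
      rw [List.range_succ_eq_map, List.map_cons, List.map_map]
    have h2 : (List.range (k + 1)).map (f ∘ Nat.succ)
        = f 1 :: (List.range k).map (f ∘ Nat.succ ∘ Nat.succ) := by
      rw [List.range_succ_eq_map, List.map_cons, List.map_map]; rfl
    rw [h1, h2, chainEdges_cons_cons, ← h2, ih]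
    rw [List.range_succ_eq_map, List.map_cons, List.map_map]
    simp [Function.comp]

lemma chainEdges_cons_map (a : V) (f : ℕ → V) (k : ℕ) :
    chainEdges (a :: (List.range (k + 1)).map f) =
      s(a, f 0) :: (List.range k).map (fun i => s(f i, f (i + 1))) := by
  have h1 : (List.range (k + 1)).map f = f 0 :: (List.range k).map (f ∘ Nat.succ) := by
    rw [List.range_succ_eq_map, List.map_cons, List.map_map]
  rw [h1, chainEdges_cons_cons, ← h1, chainEdges_map_range]


lemma chain_shape (hpr : p r = r) (hd : ∀ v, v ≠ r → dfi (p v) < dfi v)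
    (hreach : ∀ v, ∃ k, p^[k] v = r) (vis : Finset V) (b : V) :
    ∃ k, k < Fintype.card V ∧ (p^[k] b ∈ vis ∨ p^[k] b = r) ∧
      (∀ j < k, ¬(p^[j] b ∈ vis ∨ p^[j] b = r)) ∧
      towardRoot p r vis (Fintype.card V) b = (List.range (k + 1)).map (fun i => p^[i] b) := by
  have hex : ∃ k, p^[k] b ∈ vis ∨ p^[k] b = r := by
    obtain ⟨k, hk⟩ := hreach b; exact ⟨k, Or.inr hk⟩
  let k := Nat.find hex
  have hks := Nat.find_spec hex
  have hkm : ∀ j < k, ¬(p^[j] b ∈ vis ∨ p^[j] b = r) := fun j hj => Nat.find_min hex hj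
  have hinj : ∀ i j, i < j → j ≤ k → p^[i] b ≠ p^[j] b := by
    intro i j hij hjk heq
    have hir : p^[i] b ≠ r := fun h => (hkm i (lt_of_lt_of_le hij hjk)) (Or.inr h)
    have hlt : dfi (p^[j] b) < dfi (p^[i] b) := by
      have h2 : p^[j] b = p^[(j - i - 1) + 1] (p^[i] b) := by
        rw [← Function.iterate_add_apply]; congr 1; omega
      rw [h2]
      exact dfiIterLt p r dfi hpr hd _ _ hir
    rw [heq] at hlt; exact lt_irrefl _ hlt
  have hcard : k + 1 ≤ Fintype.card V := by
    have hi : Function.Injective (fun i : Fin (k + 1) => p^[(i : ℕ)] b) := by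
      intro i j hij
      by_contra hne
      have hne' : (i : ℕ) ≠ (j : ℕ) := fun h => hne (Fin.ext h)
      rcases lt_or_gt_of_ne hne' with h | h
      · exact hinj i j h (by omega) hij
      · exact hinj j i h (by omega) hij.symm
    simpa using Fintype.card_le_of_injective _ hi
  exact ⟨k, by omega, hks, hkm, towardRoot_eq p r vis k (Fintype.card V) b (by omega) hkm hks⟩

lemma climb (hpr : p r = r) (hd : ∀ v, v ≠ r → dfi (p v) < dfi v)
    (vis : Finset V) (a u : V) (hur : u ≠ r)
    (ha : ∃ m, 1 ≤ m ∧ p^[m] u = a)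
    (hinv : ∀ x ∈ vis, x ≠ r → p x ∈ vis ∨ dfi x ≤ dfi a) :
    ∀ (d : ℕ) (x : V), x ∈ vis → p^[d] x = u → u ∈ vis := by
  intro d
  induction d with
  | zero =>
    intro x hx h
    simp only [Function.iterate_zero, id] at h
    rwa [← h]
  | succ d ih =>
    intro x hx h
    obtain ⟨m, hm1, hma⟩ := ha
    have hxr : x ≠ r := fun hxr => hur (by rw [hxr, iterRoot p r hpr] at h; exact h.symm)
    have hax : a ≠ x := by
      intro hax
      have hcyc : p^[m + (d + 1)] x = x := by
        rw [Function.iterate_add_apply, h, hma, hax]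
      exact noCycle p r dfi hpr hd (by omega) hcyc hxr
    have hlt : dfi a < dfi x :=
      ancLt p r dfi hpr hd (show p^[m + (d + 1)] x = a by
        rw [Function.iterate_add_apply, h, hma]) hax
    rcases hinv x hx hxr with hpx | hle
    · exact ih (p x) hpx (by rw [← Function.iterate_succ_apply]; exact h)
    · omega

lemma runChains_cons (v w : V) (rest : List (V × V)) (vis : Finset V) :
    runChains p r ((v, w) :: rest) vis =
      (v :: towardRoot p r (insert v vis) (Fintype.card V) w) ::
        runChains p r rest
          (vis ∪ (v :: towardRoot p r (insert v vis) (Fintype.card V) w).toFinset) := rfl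

lemma backedge_in : ∀ (L : List (V × V)) (vis : Finset V) (a b : V), (a, b) ∈ L →
    ∃ c ∈ runChains p r L vis, s(a, b) ∈ chainEdges c := by
  intro L
  induction L with
  | nil => intro vis a b h; simp at h
  | cons q rest ih =>
    intro vis a b h
    obtain ⟨v, w⟩ := q
    rw [runChains_cons]
    rcases List.mem_cons.mp h with heq | hmem
    · injection heq with h1 h2
      subst h1; subst h2
      obtain ⟨t, ht⟩ := towardRoot_head p r (insert a vis) (Fintype.card V) b
      refine ⟨_, List.mem_cons_self, ?_⟩
      rw [ht, chainEdges_cons_cons]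
      exact List.mem_cons_self
    · obtain ⟨c, hc, hec⟩ := ih _ a b hmem
      exact ⟨c, List.mem_cons_of_mem _ hc, hec⟩



lemma spans_covered (hpr : p r = r) (hd : ∀ v, v ≠ r → dfi (p v) < dfi v)
    (hreach : ∀ v, ∃ k, p^[k] v = r) (u : V) (hur : u ≠ r) :
    ∀ (L : List (V × V)) (vis : Finset V),
      List.Pairwise (fun q q' => dfi q.1 ≤ dfi q'.1) L →
      (∀ x ∈ vis, x ≠ r → p x ∈ vis ∨ ∀ q ∈ L, dfi x ≤ dfi q.1) →
      u ∉ vis →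
      ∀ a b, (a, b) ∈ L → (∃ i, p^[i] b = u) → (∃ m, 1 ≤ m ∧ p^[m] u = a) →
      ∃ c ∈ runChains p r L vis, s(u, p u) ∈ chainEdges c := by
  intro L
  induction L with
  | nil => intro vis _ _ _ a b h; simp at h
  | cons q rest ih =>
    obtain ⟨a', b'⟩ := q
    intro vis hpw hinv hu a b hmem hi hm
    rw [runChains_cons]
    obtain ⟨k, hkcard, hkstop, hkmin, hTeq⟩ :=
      chain_shape p r dfi hpr hd hreach (insert a' vis) b'
    rcases List.mem_cons.mp hmem with heq | hrest
    · -- head case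
      injection heq with h1 h2; subst h1; subst h2
      obtain ⟨i, hi⟩ := hi
      obtain ⟨m, hm1, hma⟩ := hm
      have hnostop : ∀ j ≤ i, ¬(p^[j] b ∈ insert a vis ∨ p^[j] b = r) := by
        intro j hj hstop
        have hju : p^[i - j] (p^[j] b) = u := by
          rw [← Function.iterate_add_apply, show i - j + j = i by omega]; exact hi
        rcases hstop with hmem' | hre
        · rcases Finset.mem_insert.mp hmem' with hja | hjv
          · have hcyc : p^[(i - j) + m] u = u := by
              rw [Function.iterate_add_apply, hma, ← hja, hju]
            exact noCycle p r dfi hpr hd (by omega) hcyc hur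
          · exact hu (climb p r dfi hpr hd vis a u hur ⟨m, hm1, hma⟩
              (fun x hx hxr => (hinv x hx hxr).imp id (fun h => h (a, b) hmem))
              (i - j) _ hjv hju)
        · exact hur (by rw [hre, iterRoot p r hpr] at hju; exact hju.symm)
      have hik : i < k := by
        by_contra hik
        exact hnostop k (by omega) hkstop
      refine ⟨_, List.mem_cons_self, ?_⟩
      rw [hTeq, chainEdges_cons_map]
      refine List.mem_cons_of_mem _ (List.mem_map.mpr ⟨i, List.mem_range.mpr hik, ?_⟩)
      rw [show p^[i + 1] b = p u by rw [Function.iterate_succ_apply', hi], hi]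
    · -- tail case
      obtain ⟨m, hm1, hma⟩ := hm
      have hau : a ≠ u := by
        intro h
        exact noCycle p r dfi hpr hd hm1 (h ▸ hma) hur
      have hdau : dfi a < dfi u := ancLt p r dfi hpr hd hma hau
      have hsorted_head : ∀ x ∈ rest, dfi a' ≤ dfi x.1 := (List.pairwise_cons.mp hpw).1
      have hdu : dfi a' ≤ dfi a := hsorted_head (a, b) hrest
      set T := towardRoot p r (insert a' vis) (Fintype.card V) b' with hT
      by_cases huT : u ∈ (a' :: T)
      · refine ⟨_, List.mem_cons_self, ?_⟩
        rcases List.mem_cons.mp huT with hua' | huT'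
        · exact absurd (hua' ▸ hdu) (by omega)
        · rw [hTeq] at huT'
          obtain ⟨j, hjr, hj⟩ := List.mem_map.mp huT'
          have hjk : j ≤ k := by have := List.mem_range.mp hjr; omega
          rcases lt_or_eq_of_le hjk with hjk' | rfl
          · rw [hTeq, chainEdges_cons_map]
            refine List.mem_cons_of_mem _ (List.mem_map.mpr ⟨j, List.mem_range.mpr hjk', ?_⟩)
            rw [show p^[j + 1] b' = p u by rw [Function.iterate_succ_apply', hj], hj]
          · exfalso
            rcases hkstop with hmem' | hre
            · rcases Finset.mem_insert.mp (hj ▸ hmem') with hua' | huv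
              · exact absurd (hua' ▸ hdu) (by omega)
              · exact hu huv
            · exact hur (hj ▸ hre)
      · have hinv' : ∀ x ∈ vis ∪ (a' :: T).toFinset, x ≠ r →
            p x ∈ vis ∪ (a' :: T).toFinset ∨ ∀ q ∈ rest, dfi x ≤ dfi q.1 := by
          intro x hx hxr
          have hold : x ∈ vis → p x ∈ vis ∪ (a' :: T).toFinset ∨ ∀ q ∈ rest, dfi x ≤ dfi q.1 := by
            intro hxv
            rcases hinv x hxv hxr with hpx | hall
            · exact Or.inl (Finset.mem_union_left _ hpx)
            · exact Or.inr (fun q hq => hall q (List.mem_cons_of_mem _ hq))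
          rcases Finset.mem_union.mp hx with hxv | hxc
          · exact hold hxv
          · rcases List.mem_cons.mp (List.mem_toFinset.mp hxc) with rfl | hxT
            · exact Or.inr hsorted_head
            · rw [hTeq] at hxT
              obtain ⟨j, hjr, hj⟩ := List.mem_map.mp hxT
              have hjk : j ≤ k := by have := List.mem_range.mp hjr; omega
              rcases lt_or_eq_of_le hjk with hjk' | rfl
              · refine Or.inl (Finset.mem_union_right _ (List.mem_toFinset.mpr
                  (List.mem_cons_of_mem _ ?_)))
                rw [hTeq]
                refine List.mem_map.mpr ⟨j + 1, List.mem_range.mpr (by omega), ?_⟩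
                rw [Function.iterate_succ_apply', hj]
              · rcases hkstop with hmem' | hre
                · rcases Finset.mem_insert.mp (hj ▸ hmem') with rfl | huv
                  · exact Or.inr hsorted_head
                  · exact hold huv
                · exact absurd (hj ▸ hre) hxr
        have hu' : u ∉ vis ∪ (a' :: T).toFinset := by
          intro h
          rcases Finset.mem_union.mp h with h | h
          · exact hu h
          · exact huT (List.mem_toFinset.mp h)
        obtain ⟨c, hc, hec⟩ := ih _ (List.pairwise_cons.mp hpw).2 hinv' hu' a b hrest hi
          ⟨m, hm1, hma⟩
        exact ⟨c, List.mem_cons_of_mem _ hc, hec⟩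

lemma covered_sound (hpr : p r = r) (hd : ∀ v, v ≠ r → dfi (p v) < dfi v)
    (hreach : ∀ v, ∃ k, p^[k] v = r) :
    ∀ (L : List (V × V)) (vis : Finset V),
      (∀ q ∈ L, ∃ m, 1 ≤ m ∧ p^[m] q.2 = q.1) →
      ∀ c ∈ runChains p r L vis, ∀ e ∈ chainEdges c,
        ∃ q ∈ L, e = s(q.1, q.2) ∨
          ∃ u, e = s(u, p u) ∧ (∃ i, p^[i] q.2 = u) ∧ ∃ m', 1 ≤ m' ∧ p^[m'] u = q.1 := by
  intro L
  induction L with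
  | nil => intro vis _ c hc; simp [runChains] at hc
  | cons q rest ih =>
    obtain ⟨a, b⟩ := q
    intro vis hspec c hc e he
    rw [runChains_cons] at hc
    obtain ⟨k, hkcard, hkstop, hkmin, hTeq⟩ :=
      chain_shape p r dfi hpr hd hreach (insert a vis) b
    rcases List.mem_cons.mp hc with rfl | hc'
    · rw [hTeq, chainEdges_cons_map] at he
      rcases List.mem_cons.mp he with rfl | he'
      · exact ⟨(a, b), List.mem_cons_self, Or.inl rfl⟩
      · obtain ⟨j, hjr, hj⟩ := List.mem_map.mp he'
        have hjk : j < k := List.mem_range.mp hjr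
        obtain ⟨m, hm1, hma⟩ := hspec (a, b) (List.mem_cons_self)
        have hkm : k ≤ m := by
          by_contra h
          exact hkmin m (by omega) (Or.inl (Finset.mem_insert.mpr (Or.inl hma)))
        refine ⟨(a, b), List.mem_cons_self,
          Or.inr ⟨p^[j] b, ?_, ⟨j, rfl⟩, ⟨m - j, by omega, ?_⟩⟩⟩
        · rw [← hj, Function.iterate_succ_apply']
        · rw [← Function.iterate_add_apply, show m - j + j = m by omega, hma]
    · obtain ⟨q, hq, h⟩ := ih _ (fun q hq => hspec q (List.mem_cons_of_mem _ hq)) c hc' e he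
      exact ⟨q, List.mem_cons_of_mem _ hq, h⟩


lemma backedge_reach {G : SimpleGraph V} (hpr : p r = r)
    (hd : ∀ v, v ≠ r → dfi (p v) < dfi v) (hadjp : ∀ v, v ≠ r → G.Adj v (p v))
    (a b : V) (hGadj : G.Adj a b) (hnpb : a ≠ p b) (hm : ∃ m, p^[m] b = a) :
    (G \ SimpleGraph.fromEdgeSet {s(a, b)}).Reachable a b := by
  have hba : b ≠ a := hGadj.ne'
  have hspec := Nat.find_spec hm
  have hmin : ∀ j < Nat.find hm, p^[j] b ≠ a := fun j hj => Nat.find_min hm hj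
  set m₀ := Nat.find hm with hm₀
  have hm1 : 1 ≤ m₀ := by
    rcases Nat.eq_zero_or_pos m₀ with h | h
    · exfalso; rw [h] at hspec; exact hba hspec
    · exact h
  have hbr : b ≠ r := by
    intro hbr
    have haR : a = r := by rw [← hspec, hbr, iterRoot p r hpr]
    exact hGadj.ne (haR.trans hbr.symm)
  have h1 : ∀ j < m₀, p^[j] b ≠ r := by
    intro j hj hjr
    have haR : a = r := by
      rw [← hspec, show m₀ = (m₀ - j) + j by omega, Function.iterate_add_apply, hjr,
        iterRoot p r hpr]
    exact hmin j hj (hjr.trans haR.symm)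
  have h2 : ∀ j < m₀, s(p^[j] b, p (p^[j] b)) ≠ s(a, b) := by
    intro j hj heq
    rcases Sym2.eq_iff.mp heq with ⟨hxa, -⟩ | ⟨hxb, hya⟩
    · exact hmin j hj hxa
    · rcases Nat.eq_zero_or_pos j with h0 | hpos
      · rw [h0] at hya
        simp only [Function.iterate_zero, id] at hya
        exact hnpb hya.symm
      · exact noCycle p r dfi hpr hd hpos hxb hbr
  have hre := treeReach p r hadjp s(a, b) m₀ b h1 h2
  rw [hspec] at hre
  exact hre.symm

lemma spanned_reach {G : SimpleGraph V} (hpr : p r = r)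
    (hd : ∀ v, v ≠ r → dfi (p v) < dfi v) (hadjp : ∀ v, v ≠ r → G.Adj v (p v))
    (u a b : V) (hur : u ≠ r) (hGadj : G.Adj a b) (hnpb : a ≠ p b)
    (hi : ∃ i, p^[i] b = u) (hm : ∃ m, 1 ≤ m ∧ p^[m] u = a) :
    (G \ SimpleGraph.fromEdgeSet {s(u, p u)}).Reachable u (p u) := by
  have hispec := Nat.find_spec hi
  have himin : ∀ j < Nat.find hi, p^[j] b ≠ u := fun j hj => Nat.find_min hi hj
  set i₀ := Nat.find hi with hi₀
  have hmspec := Nat.find_spec hm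
  have hmmin : ∀ j < Nat.find hm, ¬(1 ≤ j ∧ p^[j] u = a) := fun j hj => Nat.find_min hm hj
  set m₀ := Nat.find hm with hm₀
  obtain ⟨hm1, hma⟩ := hmspec
  have hau : a ≠ u := by
    intro h
    exact noCycle p r dfi hpr hd hm1 (by rw [hma, h]) hur
  -- R1 : b ↝ u
  have h1 : ∀ j < i₀, p^[j] b ≠ r := by
    intro j hj hjr
    refine hur ?_
    rw [← hispec, show i₀ = (i₀ - j) + j by omega, Function.iterate_add_apply, hjr,
      iterRoot p r hpr]
  have h2 : ∀ j < i₀, s(p^[j] b, p (p^[j] b)) ≠ s(u, p u) := by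
    intro j hj heq
    rcases Sym2.eq_iff.mp heq with ⟨hxu, -⟩ | ⟨hxpu, hpxu⟩
    · exact himin j hj hxu
    · have hj1 : p^[j + 1] b = u := by rw [Function.iterate_succ_apply', hpxu]
      rcases lt_or_eq_of_le (show j + 1 ≤ i₀ by omega) with hlt | heq'
      · exact himin (j + 1) hlt hj1
      · have : p (p u) = u := by rw [← hxpu]; exact hpxu
        exact noCycle p r dfi hpr hd (m := 2) (by omega)
          (by rw [show (2 : ℕ) = 1 + 1 from rfl, Function.iterate_add_apply]
              simpa using this) hur
  have R1 := treeReach p r hadjp s(u, p u) i₀ b h1 h2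
  rw [hispec] at R1
  -- R2 : p u ↝ a
  have h1' : ∀ j < m₀ - 1, p^[j] (p u) ≠ r := by
    intro j hj hjr
    rw [← Function.iterate_succ_apply] at hjr
    have haR : a = r := by
      rw [← hma, show m₀ = (m₀ - (j + 1)) + (j + 1) by omega, Function.iterate_add_apply, hjr,
        iterRoot p r hpr]
    exact hmmin (j + 1) (by omega) ⟨by omega, by rw [hjr, haR]⟩
  have h2' : ∀ j < m₀ - 1, s(p^[j] (p u), p (p^[j] (p u))) ≠ s(u, p u) := by
    intro j hj heq
    rcases Sym2.eq_iff.mp heq with ⟨hxu, -⟩ | ⟨hxpu, hpxu⟩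
    · rw [← Function.iterate_succ_apply] at hxu
      exact noCycle p r dfi hpr hd (m := j + 1) (by omega) hxu hur
    · have : p^[j + 2] u = u := by
        rw [show j + 2 = (j + 1) + 1 from rfl, Function.iterate_succ_apply',
          Function.iterate_succ_apply, hpxu]
      exact noCycle p r dfi hpr hd (m := j + 2) (by omega) this hur
  have R2 := treeReach p r hadjp s(u, p u) (m₀ - 1) (p u) h1' h2'
  have hpa : p^[m₀ - 1] (p u) = a := by
    rw [← Function.iterate_succ_apply, Nat.succ_eq_add_one, show m₀ - 1 + 1 = m₀ by omega, hma]
  rw [hpa] at R2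
  -- R3 : a ↝ b
  have hne3 : s(a, b) ≠ s(u, p u) := by
    intro heq
    rcases Sym2.eq_iff.mp heq with ⟨hau', -⟩ | ⟨hapu, hbu⟩
    · exact hau hau'
    · exact hnpb (by rw [hbu, ← hapu])
  have R3 : (G \ SimpleGraph.fromEdgeSet {s(u, p u)}).Adj a b := by
    rw [SimpleGraph.sdiff_adj]
    refine ⟨hGadj, ?_⟩
    rw [SimpleGraph.fromEdgeSet_adj _]
    rintro ⟨hmem, -⟩
    exact hne3 hmem
  exact ((R2.trans R3.reachable).trans R1).symm

lemma exists_span {G : SimpleGraph V} (BE : List (V × V)) (hpr : p r = r)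
    (hd : ∀ v, v ≠ r → dfi (p v) < dfi v)
    (hcomp : ∀ u v, G.Adj u v → u ≠ p v → v ≠ p u → (u, v) ∈ BE ∨ (v, u) ∈ BE)
    (hspec : ∀ q ∈ BE, G.Adj q.1 q.2 ∧ q.1 ≠ p q.2 ∧ ∃ k, 2 ≤ k ∧ p^[k] q.2 = q.1)
    (v : V) (hvr : v ≠ r)
    (hre : (G \ SimpleGraph.fromEdgeSet {s(v, p v)}).Reachable v (p v)) :
    ∃ a b, (a, b) ∈ BE ∧ (∃ i, p^[i] b = v) ∧ ∃ m, 1 ≤ m ∧ p^[m] v = a := by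
  obtain ⟨w⟩ := hre
  have hvS : v ∈ {z | ∃ k, p^[k] z = v} := ⟨0, rfl⟩
  have hpvS : p v ∉ {z | ∃ k, p^[k] z = v} := by
    rintro ⟨k, hk⟩
    refine noCycle p r dfi hpr hd (m := k + 1) (by omega) ?_ hvr
    rw [Function.iterate_succ_apply]; exact hk
  obtain ⟨d, hdw, hdf, hds⟩ := w.exists_boundary_dart {z | ∃ k, p^[k] z = v} hvS hpvS
  obtain ⟨kx, hkx⟩ := hdf
  have hadj' := d.adj
  rw [SimpleGraph.sdiff_adj] at hadj'
  obtain ⟨hGadj, hnadj⟩ := hadj'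
  have hne_e : s(d.fst, d.snd) ≠ s(v, p v) := by
    intro h
    exact hnadj ((SimpleGraph.fromEdgeSet_adj _).mpr ⟨by rw [h]; rfl, hGadj.ne⟩)
  have h1 : d.fst ≠ p d.snd := by
    intro h
    exact hds ⟨kx + 1, by rw [Function.iterate_succ_apply, ← h]; exact hkx⟩
  have h2 : d.snd ≠ p d.fst := by
    intro h
    cases kx with
    | zero =>
      simp only [Function.iterate_zero, id] at hkx
      exact hne_e (by rw [hkx, h, hkx])
    | succ k =>
      refine hds ⟨k, ?_⟩
      rw [h, ← Function.iterate_succ_apply]; exact hkx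
  rcases hcomp d.fst d.snd hGadj h1 h2 with hxy | hyx
  · obtain ⟨-, -, m, hm2, hmx⟩ := hspec _ hxy
    exact absurd (⟨kx + m, by rw [Function.iterate_add_apply, hmx]; exact hkx⟩ :
      d.snd ∈ {z | ∃ k, p^[k] z = v}) hds
  · obtain ⟨hGyx, hypx, m, hm2, hmy⟩ := hspec _ hyx
    replace hmy : p^[m] d.fst = d.snd := hmy
    have hkm : kx < m := by
      by_contra hkm
      push_neg at hkm
      refine hds ⟨kx - m, ?_⟩
      calc p^[kx - m] d.snd = p^[kx - m] (p^[m] d.fst) := by rw [hmy]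
        _ = p^[kx] d.fst := by rw [← Function.iterate_add_apply, show kx - m + m = kx by omega]
        _ = v := hkx
    refine ⟨d.snd, d.fst, hyx, ⟨kx, hkx⟩, ⟨m - kx, by omega, ?_⟩⟩
    calc p^[m - kx] v = p^[m - kx] (p^[kx] d.fst) := by rw [hkx]
      _ = p^[m] d.fst := by rw [← Function.iterate_add_apply, show m - kx + kx = m by omega]
      _ = d.snd := hmy


end SchmidtAux

/-- Schmidt's criterion: an edge `e` of a connected graph `G` is a bridge if and only if
`e` is not contained in any chain of a chain decomposition `D` of `G`. -/
theorem bridge_iff_not_in_any_chain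
    (G : SimpleGraph V) (hG : G.Connected) (D : SchmidtDFS G)
    (e : Sym2 V) (he : e ∈ G.edgeSet) :
    G.IsBridge e ↔ ∀ c ∈ D.chains, e ∉ chainEdges c := by
  have hpr := D.parent_root
  have hadjp := D.parent_adj
  have hreach := D.reaches_root
  have hdp := D.dfi_parent
  revert he
  induction e using Sym2.ind with
  | _ x y =>
  intro he
  have hxy : G.Adj x y := G.mem_edgeSet.mp he
  have hspec1 : ∀ q ∈ D.backEdges, ∃ m, 1 ≤ m ∧ D.parent^[m] q.2 = q.1 := by
    intro q hq
    obtain ⟨-, -, m, hm2, hmm⟩ := D.backEdges_spec q hq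
    exact ⟨m, by omega, hmm⟩
  constructor
  · intro hB c hc hec
    obtain ⟨⟨a, b⟩, hq, hcase⟩ := covered_sound D.parent D.root D.dfi hpr hdp hreach
      D.backEdges ∅ hspec1 c hc _ hec
    obtain ⟨hGab, hnpb, mm, hmm2, hmma⟩ := D.backEdges_spec _ hq
    rcases hcase with heq | ⟨u, heq, hi, hm⟩
    · have hre := backedge_reach D.parent D.root D.dfi hpr hdp hadjp a b hGab hnpb ⟨mm, hmma⟩
      rw [heq, SimpleGraph.isBridge_iff] at hB
      exact hB hre
    · have hur : u ≠ D.root := by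
        intro h
        have hadj : G.Adj u (D.parent u) := G.mem_edgeSet.mp (heq ▸ he)
        rw [h, hpr] at hadj
        exact hadj.ne rfl
      have hre := spanned_reach D.parent D.root D.dfi hpr hdp hadjp u a b hur hGab hnpb hi hm
      rw [heq, SimpleGraph.isBridge_iff] at hB
      exact hB hre
  · intro hall
    by_contra hnB
    rw [SimpleGraph.isBridge_iff] at hnB
    push_neg at hnB
    have hre : (G \ SimpleGraph.fromEdgeSet {s(x, y)}).Reachable x y := hnB
    have hfind : ∃ c ∈ D.chains, s(x, y) ∈ chainEdges c := by
      by_cases h1 : x = D.parent y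
      · have hyr : y ≠ D.root := by
          intro h
          have hxr : x = D.root := by rw [h1, h, hpr]
          exact hxy.ne (hxr.trans h.symm)
        have heq2 : s(x, y) = s(y, D.parent y) := by rw [h1]; exact Sym2.eq_swap
        have hre' : (G \ SimpleGraph.fromEdgeSet {s(y, D.parent y)}).Reachable y
            (D.parent y) := by
          rw [← heq2, ← h1]
          exact hre.symm
        obtain ⟨a, b, hab, hi, hm⟩ := exists_span D.parent D.root D.dfi D.backEdges hpr hdp
          D.backEdges_complete D.backEdges_spec y hyr hre'
        obtain ⟨c, hc, hec⟩ := spans_covered D.parent D.root D.dfi hpr hdp hreach y hyr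
          D.backEdges ∅ D.backEdges_sorted (by simp) (by simp) a b hab hi hm
        exact ⟨c, hc, by rw [heq2]; exact hec⟩
      · by_cases h2 : y = D.parent x
        · have hxr : x ≠ D.root := by
            intro h
            have hyr : y = D.root := by rw [h2, h, hpr]
            exact hxy.ne (h.trans hyr.symm)
          have heq2 : s(x, y) = s(x, D.parent x) := by rw [h2]
          have hre' : (G \ SimpleGraph.fromEdgeSet {s(x, D.parent x)}).Reachable x
              (D.parent x) := by
            rw [← heq2, ← h2]
            exact hre
          obtain ⟨a, b, hab, hi, hm⟩ := exists_span D.parent D.root D.dfi D.backEdges hpr hdp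
            D.backEdges_complete D.backEdges_spec x hxr hre'
          obtain ⟨c, hc, hec⟩ := spans_covered D.parent D.root D.dfi hpr hdp hreach x hxr
            D.backEdges ∅ D.backEdges_sorted (by simp) (by simp) a b hab hi hm
          exact ⟨c, hc, by rw [heq2]; exact hec⟩
        · rcases D.backEdges_complete x y hxy h1 h2 with hxy' | hyx'
          · obtain ⟨c, hc, hec⟩ := backedge_in D.parent D.root D.backEdges ∅ x y hxy'
            exact ⟨c, hc, hec⟩
          · obtain ⟨c, hc, hec⟩ := backedge_in D.parent D.root D.backEdges ∅ y x hyx'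
            exact ⟨c, hc, by rw [Sym2.eq_swap]; exact hec⟩
    obtain ⟨c, hc, hec⟩ := hfind
    exact hall c hc hec
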